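/- Two infinite types are in the coinductive subtyping relation if and only if all their finite truncations are: (∀k ∈ ℕ, cut(A,k) ≤_T cut(B,k)) ↔ A ≤_T B. -/

import Mathlib

namespace CAP

/-- μ-types: variables, constants, compounds D @ A, functions A ⊃ B, unions A ⊕ B, recursive μV.A -/
inductive MuTy : Type
  | tvar : ℕ → MuTy
  | tconst : ℕ → MuTy
  | comp : MuTy → MuTy → MuTy
  | arr : MuTy → MuTy → MuTy
  | union : MuTy → MuTy → MuTy
  | mu : ℕ → MuTy → MuTy
  deriving DecidableEq

namespace MuTy

/-- substitution of `B` for variable `V` -/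
def subst (V : ℕ) (B : MuTy) : MuTy → MuTy
  | tvar n => if n = V then B else tvar n
  | tconst c => tconst c
  | comp A₁ A₂ => comp (subst V B A₁) (subst V B A₂)
  | arr A₁ A₂ => arr (subst V B A₁) (subst V B A₂)
  | union A₁ A₂ => union (subst V B A₁) (subst V B A₂)
  | mu W A => if W = V then mu W A else mu W (subst V B A)

/-- `V` occurs in the type only under `comp` or `arr` (if at all) -/
def Guarded (V : ℕ) : MuTy → Prop
  | tvar n => n ≠ V
  | tconst _ => True
  | comp _ _ => True
  | arr _ _ => True
  | union A₁ A₂ => Guarded V A₁ ∧ Guarded V A₂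
  | mu W A => W = V ∨ Guarded V A

/-- contractive μ-types -/
def Contractive : MuTy → Prop
  | tvar _ => True
  | tconst _ => True
  | comp A₁ A₂ => Contractive A₁ ∧ Contractive A₂
  | arr A₁ A₂ => Contractive A₁ ∧ Contractive A₂
  | union A₁ A₂ => Contractive A₁ ∧ Contractive A₂
  | mu V A => Guarded V A ∧ Contractive A

/-- free variables -/
def fv : MuTy → Set ℕ
  | tvar n => {n}
  | tconst _ => ∅
  | comp A₁ A₂ => fv A₁ ∪ fv A₂
  | arr A₁ A₂ => fv A₁ ∪ fv A₂
  | union A₁ A₂ => fv A₁ ∪ fv A₂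
  | mu V A => fv A \ {V}

/-- number of consecutive μ binders at the root -/
def headMu : MuTy → ℕ
  | mu _ A => headMu A + 1
  | _ => 0

end MuTy

/-- inductive μ-type equivalence ≈ -/
inductive MuEq : MuTy → MuTy → Prop
  | refl (A) : MuEq A A
  | trans : MuEq A B → MuEq B C → MuEq A C
  | symm : MuEq A B → MuEq B A
  | arrCong : MuEq A A' → MuEq B B' → MuEq (.arr A B) (.arr A' B')
  | compCong : MuEq D D' → MuEq A A' → MuEq (.comp D A) (.comp D' A')
  | unionIdem (A) : MuEq (.union A A) A
  | unionComm (A B) : MuEq (.union A B) (.union B A)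
  | unionAssoc (A B C) : MuEq (.union A (.union B C)) (.union (.union A B) C)
  | unionCong : MuEq A A' → MuEq B B' → MuEq (.union A B) (.union A' B')
  | muCong : MuEq A B → MuEq (.mu V A) (.mu V B)
  | fold (V A) : MuEq (.mu V A) (MuTy.subst V (.mu V A) A)
  | contr : MuEq A (MuTy.subst V A B) → (MuTy.mu V B).Contractive → MuEq A (.mu V B)

/-- inductive μ-type subtyping, with a context of variable assumptions -/
inductive MuLe : Set (ℕ × ℕ) → MuTy → MuTy → Prop
  | refl (S A) : MuLe S A A
  | hyp : (V, W) ∈ S → MuLe S (.tvar V) (.tvar W)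
  | eq : MuEq A B → MuLe S A B
  | trans : MuLe S A B → MuLe S B C → MuLe S A C
  | compCong : MuLe S D D' → MuLe S A A' → MuLe S (.comp D A) (.comp D' A')
  | func : MuLe S A' A → MuLe S B B' → MuLe S (.arr A B) (.arr A' B')
  | unionL : MuLe S A C → MuLe S B C → MuLe S (.union A B) C
  | unionR1 : MuLe S A B → MuLe S A (.union B C)
  | unionR2 : MuLe S A C → MuLe S A (.union B C)
  | recRule : MuLe (insert (V, W) S) A B → W ∉ A.fv → V ∉ B.fv →
      MuLe S (.mu V A) (.mu W B)

/-- binary association trees of unions, used to express n-fold unions with arbitrary association -/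
inductive UTree : Type
  | leaf : MuTy → UTree
  | node : UTree → UTree → UTree

def UTree.toTy : UTree → MuTy
  | .leaf A => A
  | .node l r => .union l.toTy r.toTy

def UTree.leaves : UTree → List MuTy
  | .leaf A => [A]
  | .node l r => l.leaves ++ r.leaves

/-! ## Infinite types as trees -/

inductive Atom : Type
  | var : ℕ → Atom
  | const : ℕ → Atom
  | bullet : Atom
  deriving DecidableEq

inductive Lab : Type
  | atom : Atom → Lab
  | comp : Lab
  | arr : Lab
  | union : Lab
  deriving DecidableEq

def Lab.IsBinary : Lab → Prop
  | .comp => True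
  | .arr => True
  | .union => True
  | .atom _ => False

/-- possibly infinite trees: partial labelling of positions -/
abbrev ITree : Type := List Bool → Option Lab

namespace ITree

def child (A : ITree) (b : Bool) : ITree := fun π => A (b :: π)

/-- well-formed infinite types: rooted, prefix-closed with binary branching,
and no infinite branch consisting solely of ⊕ -/
def Wf (A : ITree) : Prop :=
  (A []).isSome ∧
  (∀ π b, (A (π ++ [b])).isSome ↔ ∃ l, A π = some l ∧ l.IsBinary) ∧
  (∀ (π : List Bool) (f : ℕ → Bool), ∃ n, A (π ++ (List.range n).map f) ≠ some Lab.union)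

end ITree

/-- maximal union decomposition: the list of non-union components of a tree -/
inductive UnionComps : ITree → List ITree → Prop
  | nonUnion (A : ITree) : A [] ≠ some Lab.union → UnionComps A [A]
  | union (A : ITree) (l r : List ITree) :
      A [] = some Lab.union →
      UnionComps (A.child false) l → UnionComps (A.child true) r →
      UnionComps A (l ++ r)

/-- the rule functional for coinductive tree equivalence -/
def EqF (R : ITree → ITree → Prop) (A B : ITree) : Prop :=
  (∃ a : Atom, A [] = some (Lab.atom a) ∧ B [] = some (Lab.atom a)) ∨
  (A [] = some Lab.comp ∧ B [] = some Lab.comp ∧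
    R (A.child false) (B.child false) ∧ R (A.child true) (B.child true)) ∨
  (A [] = some Lab.arr ∧ B [] = some Lab.arr ∧
    R (A.child false) (B.child false) ∧ R (A.child true) (B.child true)) ∨
  (∃ (la lb : List ITree), UnionComps A la ∧ UnionComps B lb ∧
    2 < la.length + lb.length ∧
    (∃ f : Fin la.length → Fin lb.length, ∀ i, R (la.get i) (lb.get (f i))) ∧
    (∃ g : Fin lb.length → Fin la.length, ∀ j, R (la.get (g j)) (lb.get j)))

/-- coinductive tree equivalence ≈_T : the greatest fixed point of `EqF` -/
def TreeEq (A B : ITree) : Prop :=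
  ∃ R : ITree → ITree → Prop, (∀ X Y, R X Y → EqF R X Y) ∧ R A B

/-- the rule functional for coinductive tree subtyping -/
def LeF (R : ITree → ITree → Prop) (A B : ITree) : Prop :=
  (∃ a : Atom, A [] = some (Lab.atom a) ∧ B [] = some (Lab.atom a)) ∨
  (A [] = some Lab.comp ∧ B [] = some Lab.comp ∧
    R (A.child false) (B.child false) ∧ R (A.child true) (B.child true)) ∨
  (A [] = some Lab.arr ∧ B [] = some Lab.arr ∧
    R (B.child false) (A.child false) ∧ R (A.child true) (B.child true)) ∨
  (∃ (la lb : List ITree), UnionComps A la ∧ UnionComps B lb ∧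
    2 < la.length + lb.length ∧
    (∃ f : Fin la.length → Fin lb.length, ∀ i, R (la.get i) (lb.get (f i))))

/-- coinductive tree subtyping ≤_T : the greatest fixed point of `LeF` -/
def TreeLe (A B : ITree) : Prop :=
  ∃ R : ITree → ITree → Prop, (∀ X Y, R X Y → LeF R X Y) ∧ R A B

open Classical in
/-- tree substitution of tree `B` for the variable `V` -/
noncomputable def substT (V : ℕ) (B A : ITree) : ITree := fun π =>
  if h : ∃ ps : List Bool × List Bool,
      π = ps.1 ++ ps.2 ∧ A ps.1 = some (Lab.atom (Atom.var V))
  then B (Classical.choose h).2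
  else A π

/-- the single-node tree consisting of an atom -/
def atomTree (a : Atom) : ITree := fun π => if π = [] then some (Lab.atom a) else none

/-- a tree with binary root label `l` and subtrees `A₁`, `A₂` -/
def binTree (l : Lab) (A₁ A₂ : ITree) : ITree := fun π =>
  match π with
  | [] => some l
  | false :: π' => A₁ π'
  | true :: π' => A₂ π'

/-- effective depth of a position: union nodes do not consume depth -/
def edepth (A : ITree) : List Bool → ℕ
  | [] => 0
  | b :: π => (if A [] = some Lab.union then 0 else 1) + edepth (A.child b) π

open Classical in
/-- truncation of a tree at depth `k`; cut points are replaced by the constant • -/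
noncomputable def cut (k : ℕ) (A : ITree) : ITree := fun π =>
  if ∀ p, p <+: π → p ≠ π → edepth A p < k then
    (if edepth A π < k then A π
     else if (A π).isSome then some (Lab.atom Atom.bullet) else none)
  else none

/-- labels of the tree interpretation of a μ-type (μ is unfolded completely) -/
inductive HasLab : MuTy → List Bool → Lab → Prop
  | tvar (n) : HasLab (.tvar n) [] (.atom (.var n))
  | tconst (c) : HasLab (.tconst c) [] (.atom (.const c))
  | compRoot (A B) : HasLab (.comp A B) [] .comp
  | compL : HasLab A π l → HasLab (.comp A B) (false :: π) l
  | compR : HasLab B π l → HasLab (.comp A B) (true :: π) l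
  | arrRoot (A B) : HasLab (.arr A B) [] .arr
  | arrL : HasLab A π l → HasLab (.arr A B) (false :: π) l
  | arrR : HasLab B π l → HasLab (.arr A B) (true :: π) l
  | unionRoot (A B) : HasLab (.union A B) [] .union
  | unionL : HasLab A π l → HasLab (.union A B) (false :: π) l
  | unionR : HasLab B π l → HasLab (.union A B) (true :: π) l
  | mu : HasLab (MuTy.subst V (.mu V A) A) π l → HasLab (.mu V A) π l

open Classical in
/-- the tree interpretation ⟦·⟧ of μ-types -/
noncomputable def interp (A : MuTy) : ITree := fun π =>
  if h : ∃ l, HasLab A π l then some (Classical.choose h) else none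

/-- application of a parallel substitution to a μ-type -/
def applyS (σ : ℕ → MuTy) : MuTy → MuTy
  | .tvar n => σ n
  | .tconst c => .tconst c
  | .comp A B => .comp (applyS σ A) (applyS σ B)
  | .arr A B => .arr (applyS σ A) (applyS σ B)
  | .union A B => .union (applyS σ A) (applyS σ B)
  | .mu V A => .mu V (applyS (Function.update σ V (.tvar V)) A)

/-- outermost type constructor (head μ binders are unfolded/skipped) -/
inductive HeadC : Type
  | hvar : ℕ → HeadC
  | hconst : ℕ → HeadC
  | hcomp : HeadC
  | harr : HeadC
  | hunion : HeadC
  deriving DecidableEq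

def headOf : MuTy → HeadC
  | .tvar n => .hvar n
  | .tconst c => .hconst c
  | .comp _ _ => .hcomp
  | .arr _ _ => .harr
  | .union _ _ => .hunion
  | .mu _ A => headOf A

/-- non-union μ-types: after unfolding head μ binders the top constructor is not ⊕ -/
def NonUnion : MuTy → Prop
  | .union _ _ => False
  | .mu _ A => NonUnion A
  | _ => True

/-- union contexts U ::= □ | U ⊕ A | A ⊕ U -/
inductive UCtx : Type
  | hole : UCtx
  | left : UCtx → MuTy → UCtx
  | right : MuTy → UCtx → UCtx

def UCtx.fill : UCtx → MuTy → MuTy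
  | .hole, A => A
  | .left U B, A => .union (U.fill A) B
  | .right B U, A => .union B (U.fill A)

end CAP

namespace CAP

open ITree

lemma wf_child {A : ITree} (hA : A.Wf) {l : Lab} (hl : A [] = some l)
    (hb : l.IsBinary) (b : Bool) : (A.child b).Wf := by
  obtain ⟨h1, h2, h3⟩ := hA
  refine ⟨?_, ?_, ?_⟩
  · have := (h2 [] b).2 ⟨l, hl, hb⟩
    simpa [ITree.child] using this
  · intro π b'
    have := h2 (b :: π) b'
    simpa [ITree.child] using this
  · intro π f
    have := h3 (b :: π) f
    simpa [ITree.child] using this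

lemma edepth_nil (A : ITree) : edepth A [] = 0 := rfl

lemma edepth_cons (A : ITree) (b : Bool) (π : List Bool) :
    edepth A (b :: π) = (if A [] = some Lab.union then 0 else 1) + edepth (A.child b) π := rfl

lemma cut_root {k : ℕ} (hk : 0 < k) (A : ITree) : cut k A [] = A [] := by
  unfold cut
  rw [if_pos, if_pos]
  · simpa [edepth_nil] using hk
  · intro p hp hne
    exact absurd (List.prefix_nil.mp hp) hne

lemma cut_zero_root {A : ITree} (h : (A []).isSome) :
    cut 0 A [] = some (Lab.atom Atom.bullet) := by
  unfold cut
  rw [if_pos, if_neg, if_pos h]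
  · simp [edepth_nil]
  · intro p hp hne
    exact absurd (List.prefix_nil.mp hp) hne

lemma cut_child_union {A : ITree} (h : A [] = some Lab.union) {k : ℕ} (hk : 0 < k) (b : Bool) :
    (cut k A).child b = cut k (A.child b) := by
  funext π
  show cut k A (b :: π) = cut k (A.child b) π
  unfold cut
  have hguard : (∀ p, p <+: (b :: π) → p ≠ b :: π → edepth A p < k) ↔
      (∀ q, q <+: π → q ≠ π → edepth (A.child b) q < k) := by
    constructor
    · intro H q hq hne
      have := H (b :: q) (List.cons_prefix_cons.mpr ⟨rfl, hq⟩) (by simpa using hne)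
      rwa [edepth_cons, if_pos h, Nat.zero_add] at this
    · intro H p hp hne
      rcases List.prefix_cons_iff.mp hp with rfl | ⟨q, rfl, hq⟩
      · simpa [edepth_nil] using hk
      · rw [edepth_cons, if_pos h, Nat.zero_add]
        exact H q hq (by simpa using hne)
  by_cases hg : ∀ q, q <+: π → q ≠ π → edepth (A.child b) q < k
  · rw [if_pos (hguard.mpr hg), if_pos hg]
    rw [edepth_cons, if_pos h, Nat.zero_add]
    rfl
  · rw [if_neg (fun H => hg (hguard.mp H)), if_neg hg]

lemma cut_child_not_union {A : ITree} (h : A [] ≠ some Lab.union) (k : ℕ) (b : Bool) :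
    (cut (k + 1) A).child b = cut k (A.child b) := by
  funext π
  show cut (k + 1) A (b :: π) = cut k (A.child b) π
  unfold cut
  have hguard : (∀ p, p <+: (b :: π) → p ≠ b :: π → edepth A p < k + 1) ↔
      (∀ q, q <+: π → q ≠ π → edepth (A.child b) q < k) := by
    constructor
    · intro H q hq hne
      have := H (b :: q) (List.cons_prefix_cons.mpr ⟨rfl, hq⟩) (by simpa using hne)
      rw [edepth_cons, if_neg h] at this
      omega
    · intro H p hp hne
      rcases List.prefix_cons_iff.mp hp with rfl | ⟨q, rfl, hq⟩
      · simp [edepth_nil]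
      · rw [edepth_cons, if_neg h]
        have := H q hq (by simpa using hne)
        omega
  by_cases hg : ∀ q, q <+: π → q ≠ π → edepth (A.child b) q < k
  · rw [if_pos (hguard.mpr hg), if_pos hg]
    rw [edepth_cons, if_neg h]
    have : (1 + edepth (A.child b) π < k + 1) ↔ (edepth (A.child b) π < k) := by omega
    by_cases he : edepth (A.child b) π < k
    · rw [if_pos (this.mpr he), if_pos he]; rfl
    · rw [if_neg (fun H => he (this.mp H)), if_neg he]; rfl
  · rw [if_neg (fun H => hg (hguard.mp H)), if_neg hg]


section
variable {A : ITree}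

lemma unionComps_nonempty {l : List ITree} (h : UnionComps A l) : l ≠ [] := by
  induction h with
  | nonUnion A h => simp
  | union A l r _ _ _ ihl ihr => simp [ihl]

lemma unionComps_of_ne {l : List ITree} (hne : A [] ≠ some Lab.union)
    (h : UnionComps A l) : l = [A] := by
  cases h with
  | nonUnion _ _ => rfl
  | union _ _ _ h => exact absurd h hne

lemma unionComps_unique {l l' : List ITree} (h : UnionComps A l) (h' : UnionComps A l') :
    l = l' := by
  induction h generalizing l' with
  | nonUnion A hne => exact (unionComps_of_ne hne h').symm
  | union A l r hu hl hr ihl ihr =>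
    cases h' with
    | nonUnion _ hne => exact absurd hu hne
    | union _ l' r' _ hl' hr' => rw [ihl hl', ihr hr']

lemma unionComps_wf {l : List ITree} (hA : A.Wf) (h : UnionComps A l) :
    ∀ X ∈ l, X.Wf := by
  induction h with
  | nonUnion A _ => simpa using hA
  | union A l r hu hl hr ihl ihr =>
    intro X hX
    rcases List.mem_append.mp hX with hX | hX
    · exact ihl (wf_child hA hu trivial false) X hX
    · exact ihr (wf_child hA hu trivial true) X hX

lemma unionComps_cut {l : List ITree} {k : ℕ} (hk : 0 < k) (h : UnionComps A l) :
    UnionComps (cut k A) (l.map (cut k)) := by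
  induction h with
  | nonUnion A hne =>
    exact UnionComps.nonUnion _ (by rw [cut_root hk]; exact hne)
  | union A l r hu hl hr ihl ihr =>
    rw [List.map_append]
    refine UnionComps.union _ _ _ (by rw [cut_root hk, hu]) ?_ ?_
    · rwa [cut_child_union hu hk]
    · rwa [cut_child_union hu hk]

lemma unionComps_two {l : List ITree} (h : UnionComps A l) (hl : 2 ≤ l.length) :
    A [] = some Lab.union := by
  cases h with
  | nonUnion _ _ => simp at hl
  | union _ _ _ hu _ _ => exact hu

/-- subtree relation along union spines -/
def USub (Y X : ITree) : Prop :=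
  X [] = some Lab.union ∧ (Y = X.child false ∨ Y = X.child true)

lemma acc_usub (hA : A.Wf) : Acc USub A := by
  by_contra hacc
  have step : ∀ X : ITree, ¬ Acc USub X →
      ∃ b : Bool, X [] = some Lab.union ∧ ¬ Acc USub (X.child b) := by
    intro X hX
    by_contra hcon
    push_neg at hcon
    refine hX ⟨X, fun Y hY => ?_⟩
    rcases hY with ⟨hu, rfl | rfl⟩
    · exact hcon false hu
    · exact hcon true hu
  choose pick hu hnacc using step
  let g : ℕ → {X : ITree // ¬ Acc USub X} := fun n =>
    Nat.rec ⟨A, hacc⟩ (fun _ p => ⟨p.1.child (pick p.1 p.2), hnacc p.1 p.2⟩) n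
  let bs : ℕ → Bool := fun n => pick (g n).1 (g n).2
  have key : ∀ n, (g n).1 = fun π => A ((List.range n).map bs ++ π) := by
    intro n
    induction n with
    | zero => rfl
    | succ n ih =>
      funext π
      show (g n).1 (bs n :: π) = _
      rw [ih]
      show A ((List.range n).map bs ++ (bs n :: π)) = A ((List.range (n+1)).map bs ++ π)
      simp [List.range_succ]
  have hun : ∀ n, A ((List.range n).map bs) = some Lab.union := by
    intro n
    have := hu (g n).1 (g n).2
    rw [key n] at this
    simpa using this
  obtain ⟨n, hn⟩ := hA.2.2 [] bs
  simp only [List.nil_append] at hn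
  exact hn (hun n)

lemma unionComps_exists (hA : A.Wf) : ∃ l, UnionComps A l := by
  have main : ∀ X : ITree, Acc USub X → X.Wf → ∃ l, UnionComps X l := by
    intro X hacc
    induction hacc with
    | intro X h ih =>
      intro hX
      by_cases hu : X [] = some Lab.union
      · obtain ⟨l, hl⟩ := ih (X.child false) ⟨hu, Or.inl rfl⟩ (wf_child hX hu trivial false)
        obtain ⟨r, hr⟩ := ih (X.child true) ⟨hu, Or.inr rfl⟩ (wf_child hX hu trivial true)
        exact ⟨l ++ r, UnionComps.union X l r hu hl hr⟩
      · exact ⟨[X], UnionComps.nonUnion X hu⟩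
  exact main A (acc_usub hA) hA

end


lemma LeF_mono {R S : ITree → ITree → Prop} (h : ∀ X Y, R X Y → S X Y) {A B : ITree} :
    LeF R A B → LeF S A B := by
  rintro (⟨a, h1, h2⟩ | ⟨h1, h2, h3, h4⟩ | ⟨h1, h2, h3, h4⟩ | ⟨la, lb, h1, h2, h3, f, hf⟩)
  · exact Or.inl ⟨a, h1, h2⟩
  · exact Or.inr (Or.inl ⟨h1, h2, h _ _ h3, h _ _ h4⟩)
  · exact Or.inr (Or.inr (Or.inl ⟨h1, h2, h _ _ h3, h _ _ h4⟩))
  · exact Or.inr (Or.inr (Or.inr ⟨la, lb, h1, h2, h3, f, fun i => h _ _ (hf i)⟩))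

lemma TreeLe.unfold {A B : ITree} (h : TreeLe A B) : LeF TreeLe A B := by
  obtain ⟨R, hR, hAB⟩ := h
  exact LeF_mono (fun X Y hXY => ⟨R, hR, hXY⟩) (hR _ _ hAB)

lemma get_map (g : ITree → ITree) (l : List ITree) (i : Fin (l.map g).length) :
    (l.map g).get i = g (l.get (i.cast (List.length_map (as := l) g))) := by
  simp [List.get_eq_getElem, List.getElem_map]

lemma key (k : ℕ) (X Y : ITree) (hX : X.Wf) (hY : Y.Wf)
    (h : TreeLe X Y ∨ ∃ k', k ≤ k' ∧ TreeLe (cut k' X) (cut k' Y)) :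
    TreeLe (cut k X) (cut k Y) := by
  refine ⟨fun U V => ∃ (k : ℕ) (X Y : ITree), X.Wf ∧ Y.Wf ∧ U = cut k X ∧ V = cut k Y ∧
      (TreeLe X Y ∨ ∃ k', k ≤ k' ∧ TreeLe (cut k' X) (cut k' Y)),
    ?_, k, X, Y, hX, hY, rfl, rfl, h⟩
  clear h hX hY k X Y
  rintro U V ⟨k, X, Y, hX, hY, rfl, rfl, hle⟩
  match k with
  | 0 => exact Or.inl ⟨Atom.bullet, cut_zero_root hX.1, cut_zero_root hY.1⟩
  | (k+1) =>
    have hkpos : 0 < k + 1 := Nat.succ_pos k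
    rcases hle with hle | ⟨k', hk', hle⟩
    · -- branch 1 : TreeLe X Y
      rcases hle.unfold with ⟨a, h1, h2⟩ | ⟨h1, h2, h3, h4⟩ | ⟨h1, h2, h3, h4⟩ |
        ⟨la, lb, h1, h2, h3, f, hf⟩
      · exact Or.inl ⟨a, by rw [cut_root hkpos]; exact h1, by rw [cut_root hkpos]; exact h2⟩
      · refine Or.inr (Or.inl ⟨by rw [cut_root hkpos]; exact h1,
          by rw [cut_root hkpos]; exact h2, ?_, ?_⟩)
        · rw [cut_child_not_union (by simp [h1, h2]) k false,
            cut_child_not_union (by simp [h1, h2]) k false]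
          exact ⟨k, _, _, wf_child hX h1 trivial false, wf_child hY h2 trivial false,
            rfl, rfl, Or.inl h3⟩
        · rw [cut_child_not_union (by simp [h1, h2]) k true,
            cut_child_not_union (by simp [h1, h2]) k true]
          exact ⟨k, _, _, wf_child hX h1 trivial true, wf_child hY h2 trivial true,
            rfl, rfl, Or.inl h4⟩
      · refine Or.inr (Or.inr (Or.inl ⟨by rw [cut_root hkpos]; exact h1,
          by rw [cut_root hkpos]; exact h2, ?_, ?_⟩))
        · rw [cut_child_not_union (by simp [h1, h2]) k false,
            cut_child_not_union (by simp [h1, h2]) k false]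
          exact ⟨k, _, _, wf_child hY h2 trivial false, wf_child hX h1 trivial false,
            rfl, rfl, Or.inl h3⟩
        · rw [cut_child_not_union (by simp [h1, h2]) k true,
            cut_child_not_union (by simp [h1, h2]) k true]
          exact ⟨k, _, _, wf_child hX h1 trivial true, wf_child hY h2 trivial true,
            rfl, rfl, Or.inl h4⟩
      · refine Or.inr (Or.inr (Or.inr ⟨la.map (cut (k+1)), lb.map (cut (k+1)),
          unionComps_cut hkpos h1, unionComps_cut hkpos h2, by simpa using h3,
          fun i => ((f (i.cast (List.length_map (as := la) _))).cast
            (List.length_map (as := lb) _).symm), fun i => ?_⟩))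
        rw [get_map, get_map]
        have hcast : ((f (i.cast (List.length_map (as := la) _))).cast
            (List.length_map (as := lb) (cut (k+1))).symm).cast (List.length_map (as := lb) _)
            = f (i.cast (List.length_map (as := la) _)) := by
          apply Fin.ext; simp
        rw [hcast]
        exact ⟨k + 1, _, _,
          unionComps_wf hX h1 _ (List.get_mem _ _),
          unionComps_wf hY h2 _ (List.get_mem _ _),
          rfl, rfl, Or.inl (hf _)⟩
    · -- branch 2 : TreeLe (cut k' X) (cut k' Y), k + 1 ≤ k'
      obtain ⟨k'', rfl⟩ : ∃ k'', k' = k'' + 1 := ⟨k' - 1, by omega⟩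
      have hk''pos : 0 < k'' + 1 := Nat.succ_pos k''
      rcases hle.unfold with ⟨a, h1, h2⟩ | ⟨h1, h2, h3, h4⟩ | ⟨h1, h2, h3, h4⟩ |
        ⟨la', lb', h1, h2, h3, f, hf⟩
      · rw [cut_root hk''pos] at h1 h2
        exact Or.inl ⟨a, by rw [cut_root hkpos]; exact h1, by rw [cut_root hkpos]; exact h2⟩
      · rw [cut_root hk''pos] at h1 h2
        rw [cut_child_not_union (by simp [h1, h2]) k'' false,
          cut_child_not_union (by simp [h1, h2]) k'' false] at h3
        rw [cut_child_not_union (by simp [h1, h2]) k'' true,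
          cut_child_not_union (by simp [h1, h2]) k'' true] at h4
        refine Or.inr (Or.inl ⟨by rw [cut_root hkpos]; exact h1,
          by rw [cut_root hkpos]; exact h2, ?_, ?_⟩)
        · rw [cut_child_not_union (by simp [h1, h2]) k false,
            cut_child_not_union (by simp [h1, h2]) k false]
          exact ⟨k, _, _, wf_child hX h1 trivial false, wf_child hY h2 trivial false,
            rfl, rfl, Or.inr ⟨k'', by omega, h3⟩⟩
        · rw [cut_child_not_union (by simp [h1, h2]) k true,
            cut_child_not_union (by simp [h1, h2]) k true]
          exact ⟨k, _, _, wf_child hX h1 trivial true, wf_child hY h2 trivial true,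
            rfl, rfl, Or.inr ⟨k'', by omega, h4⟩⟩
      · rw [cut_root hk''pos] at h1 h2
        rw [cut_child_not_union (by simp [h1, h2]) k'' false,
          cut_child_not_union (by simp [h1, h2]) k'' false] at h3
        rw [cut_child_not_union (by simp [h1, h2]) k'' true,
          cut_child_not_union (by simp [h1, h2]) k'' true] at h4
        refine Or.inr (Or.inr (Or.inl ⟨by rw [cut_root hkpos]; exact h1,
          by rw [cut_root hkpos]; exact h2, ?_, ?_⟩))
        · rw [cut_child_not_union (by simp [h1, h2]) k false,
            cut_child_not_union (by simp [h1, h2]) k false]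
          exact ⟨k, _, _, wf_child hY h2 trivial false, wf_child hX h1 trivial false,
            rfl, rfl, Or.inr ⟨k'', by omega, h3⟩⟩
        · rw [cut_child_not_union (by simp [h1, h2]) k true,
            cut_child_not_union (by simp [h1, h2]) k true]
          exact ⟨k, _, _, wf_child hX h1 trivial true, wf_child hY h2 trivial true,
            rfl, rfl, Or.inr ⟨k'', by omega, h4⟩⟩
      · obtain ⟨la, hla⟩ := unionComps_exists hX
        obtain ⟨lb, hlb⟩ := unionComps_exists hY
        obtain rfl : la' = la.map (cut (k'' + 1)) :=
          unionComps_unique h1 (unionComps_cut hk''pos hla)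
        obtain rfl : lb' = lb.map (cut (k'' + 1)) :=
          unionComps_unique h2 (unionComps_cut hk''pos hlb)
        simp only [List.length_map] at h3
        refine Or.inr (Or.inr (Or.inr ⟨la.map (cut (k+1)), lb.map (cut (k+1)),
          unionComps_cut hkpos hla, unionComps_cut hkpos hlb, by simpa using h3,
          fun i => ((f ((i.cast (List.length_map (as := la) _)).cast
              (List.length_map (as := la) (cut (k''+1))).symm)).cast
            (List.length_map (as := lb) _)).cast (List.length_map (as := lb) (cut (k+1))).symm,
          fun i => ?_⟩))
        rw [get_map, get_map]
        have hfi := hf ((i.cast (List.length_map (as := la) _)).cast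
          (List.length_map (as := la) (cut (k''+1))).symm)
        rw [get_map, get_map] at hfi
        refine ⟨k + 1, _, _,
          unionComps_wf hX hla _ (List.get_mem _ _),
          unionComps_wf hY hlb _ (List.get_mem _ _),
          rfl, rfl, Or.inr ⟨k'' + 1, by omega, ?_⟩⟩
        convert hfi using 3 <;> exact Fin.ext rfl


lemma le_cut {A B : ITree} (hA : A.Wf) (hB : B.Wf) (h : TreeLe A B) (k : ℕ) :
    TreeLe (cut k A) (cut k B) := key k A B hA hB (Or.inl h)

lemma le_mono {A B : ITree} (hA : A.Wf) (hB : B.Wf) {k k' : ℕ} (hk : k ≤ k')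
    (h : TreeLe (cut k' A) (cut k' B)) : TreeLe (cut k A) (cut k B) :=
  key k A B hA hB (Or.inr ⟨k', hk, h⟩)

theorem stmt11' (A B : ITree) (hA : A.Wf) (hB : B.Wf) :
    (∀ k : ℕ, TreeLe (cut k A) (cut k B)) ↔ TreeLe A B := by
  constructor
  · intro h
    refine ⟨fun U V => U.Wf ∧ V.Wf ∧ ∀ k, TreeLe (cut k U) (cut k V), ?_, hA, hB, h⟩
    rintro X Y ⟨hX, hY, hXY⟩
    rcases (hXY 1).unfold with ⟨a, h1, h2⟩ | ⟨h1, h2, -, -⟩ | ⟨h1, h2, -, -⟩ |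
      ⟨la1, lb1, h1, h2, h3, -⟩
    · rw [cut_root one_pos] at h1 h2
      exact Or.inl ⟨a, h1, h2⟩
    · rw [cut_root one_pos] at h1 h2
      have hch : ∀ (k : ℕ) (b : Bool), TreeLe (cut k (X.child b)) (cut k (Y.child b)) := by
        intro k b
        rcases (hXY (k+1)).unfold with ⟨a, g1, g2⟩ | ⟨g1, g2, g3, g4⟩ | ⟨g1, g2, g3, g4⟩ |
          ⟨la, lb, g1, g2, g3, -⟩
        · rw [cut_root (Nat.succ_pos k)] at g1
          exact absurd (h1.symm.trans g1) (by simp)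
        · rw [cut_child_not_union (by simp [h1]) k false,
            cut_child_not_union (by simp [h2]) k false] at g3
          rw [cut_child_not_union (by simp [h1]) k true,
            cut_child_not_union (by simp [h2]) k true] at g4
          cases b
          · exact g3
          · exact g4
        · rw [cut_root (Nat.succ_pos k)] at g1
          exact absurd (h1.symm.trans g1) (by simp)
        · have e1 := unionComps_of_ne (by rw [cut_root (Nat.succ_pos k), h1]; simp) g1
          have e2 := unionComps_of_ne (by rw [cut_root (Nat.succ_pos k), h2]; simp) g2
          subst e1; subst e2
          simp at g3
      exact Or.inr (Or.inl ⟨h1, h2,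
        ⟨wf_child hX h1 trivial false, wf_child hY h2 trivial false, fun k => hch k false⟩,
        ⟨wf_child hX h1 trivial true, wf_child hY h2 trivial true, fun k => hch k true⟩⟩)
    · rw [cut_root one_pos] at h1 h2
      have hch1 : ∀ k : ℕ, TreeLe (cut k (Y.child false)) (cut k (X.child false)) := by
        intro k
        rcases (hXY (k+1)).unfold with ⟨a, g1, g2⟩ | ⟨g1, g2, g3, g4⟩ | ⟨g1, g2, g3, g4⟩ |
          ⟨la, lb, g1, g2, g3, -⟩
        · rw [cut_root (Nat.succ_pos k)] at g1
          exact absurd (h1.symm.trans g1) (by simp)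
        · rw [cut_root (Nat.succ_pos k)] at g1
          exact absurd (h1.symm.trans g1) (by simp)
        · rw [cut_child_not_union (by simp [h2]) k false,
            cut_child_not_union (by simp [h1]) k false] at g3
          exact g3
        · have e1 := unionComps_of_ne (by rw [cut_root (Nat.succ_pos k), h1]; simp) g1
          have e2 := unionComps_of_ne (by rw [cut_root (Nat.succ_pos k), h2]; simp) g2
          subst e1; subst e2
          simp at g3
      have hch2 : ∀ k : ℕ, TreeLe (cut k (X.child true)) (cut k (Y.child true)) := by
        intro k
        rcases (hXY (k+1)).unfold with ⟨a, g1, g2⟩ | ⟨g1, g2, g3, g4⟩ | ⟨g1, g2, g3, g4⟩ |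
          ⟨la, lb, g1, g2, g3, -⟩
        · rw [cut_root (Nat.succ_pos k)] at g1
          exact absurd (h1.symm.trans g1) (by simp)
        · rw [cut_root (Nat.succ_pos k)] at g1
          exact absurd (h1.symm.trans g1) (by simp)
        · rw [cut_child_not_union (by simp [h1]) k true,
            cut_child_not_union (by simp [h2]) k true] at g4
          exact g4
        · have e1 := unionComps_of_ne (by rw [cut_root (Nat.succ_pos k), h1]; simp) g1
          have e2 := unionComps_of_ne (by rw [cut_root (Nat.succ_pos k), h2]; simp) g2
          subst e1; subst e2
          simp at g3
      exact Or.inr (Or.inr (Or.inl ⟨h1, h2,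
        ⟨wf_child hY h2 trivial false, wf_child hX h1 trivial false, hch1⟩,
        ⟨wf_child hX h1 trivial true, wf_child hY h2 trivial true, hch2⟩⟩))
    · obtain ⟨la, hla⟩ := unionComps_exists hX
      obtain ⟨lb, hlb⟩ := unionComps_exists hY
      obtain rfl : la1 = la.map (cut 1) := unionComps_unique h1 (unionComps_cut one_pos hla)
      obtain rfl : lb1 = lb.map (cut 1) := unionComps_unique h2 (unionComps_cut one_pos hlb)
      simp only [List.length_map] at h3
      have hroot : X [] = some Lab.union ∨ Y [] = some Lab.union := by
        by_contra hc
        push_neg at hc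
        have e1 := unionComps_of_ne hc.1 hla
        have e2 := unionComps_of_ne hc.2 hlb
        subst e1; subst e2
        simp at h3
      have hstep : ∀ k : ℕ, ∃ f : Fin la.length → Fin lb.length,
          ∀ i, TreeLe (cut (k+1) (la.get i)) (cut (k+1) (lb.get (f i))) := by
        intro k
        rcases (hXY (k+1)).unfold with ⟨a, g1, g2⟩ | ⟨g1, g2, -, -⟩ | ⟨g1, g2, -, -⟩ |
          ⟨la', lb', g1, g2, g3, f, hf⟩
        · exfalso
          rw [cut_root (Nat.succ_pos k)] at g1 g2
          rcases hroot with hu | hu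
          · rw [hu] at g1; simp at g1
          · rw [hu] at g2; simp at g2
        · exfalso
          rw [cut_root (Nat.succ_pos k)] at g1 g2
          rcases hroot with hu | hu
          · rw [hu] at g1; simp at g1
          · rw [hu] at g2; simp at g2
        · exfalso
          rw [cut_root (Nat.succ_pos k)] at g1 g2
          rcases hroot with hu | hu
          · rw [hu] at g1; simp at g1
          · rw [hu] at g2; simp at g2
        · obtain rfl : la' = la.map (cut (k+1)) :=
            unionComps_unique g1 (unionComps_cut (Nat.succ_pos k) hla)
          obtain rfl : lb' = lb.map (cut (k+1)) :=
            unionComps_unique g2 (unionComps_cut (Nat.succ_pos k) hlb)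
          refine ⟨fun i => (f (i.cast (List.length_map (as := la) _).symm)).cast
            (List.length_map (as := lb) _), fun i => ?_⟩
          have hfi := hf (i.cast (List.length_map (as := la) (cut (k+1))).symm)
          rw [get_map, get_map] at hfi
          convert hfi using 3 <;> exact Fin.ext rfl
      choose F hF using hstep
      obtain ⟨f, hfinf⟩ := Finite.exists_infinite_fiber F
      have hinf : (F ⁻¹' {f}).Infinite := Set.infinite_coe_iff.mp hfinf
      refine Or.inr (Or.inr (Or.inr ⟨la, lb, hla, hlb, h3, f, fun i => ?_⟩))
      refine ⟨unionComps_wf hX hla _ (List.get_mem _ _),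
        unionComps_wf hY hlb _ (List.get_mem _ _), fun k => ?_⟩
      obtain ⟨k', hk'mem, hk'not⟩ := hinf.exists_notMem_finset (Finset.range k)
      have hk'' : k ≤ k' + 1 := by
        simp only [Finset.mem_range, not_lt] at hk'not
        omega
      have hFk : F k' = f := hk'mem
      exact le_mono (unionComps_wf hX hla _ (List.get_mem _ _))
        (unionComps_wf hY hlb _ (List.get_mem _ _)) hk'' (hFk ▸ hF k' i)
  · intro h k
    exact le_cut hA hB h k


/-- two infinite types are in the coinductive subtyping relation iff
all their finite truncations are. -/
theorem stmt11 (A B : ITree) (hA : A.Wf) (hB : B.Wf) :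
    (∀ k : ℕ, TreeLe (cut k A) (cut k B)) ↔ TreeLe A B := stmt11' A B hA hB

end CAP
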